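/- Let m, n be positive integers and define f : ℝ² → ℝ by f(x,y) := x^m y^n. Then f has a strict saddle point at (0,0) if and only if both m and n are odd. -/

import Mathlib

open Set Filter Topology

/-- `γ : [a, b] → D` is a regular path in `D`: it is continuous on `[a, b]`, maps `[a, b]`
into `D`, is differentiable on `(a, b)`, and its derivative is nonvanishing on `(a, b)`. -/
def IsRegularPath (D : Set (ℝ × ℝ)) (γ : ℝ → ℝ × ℝ) (a b : ℝ) : Prop :=
  a < b ∧ ContinuousOn γ (Set.Icc a b) ∧ Set.MapsTo γ (Set.Icc a b) D ∧
    ∀ t ∈ Set.Ioo a b, DifferentiableAt ℝ γ t ∧ deriv γ t ≠ 0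

/-- A function of one real variable has a strict local maximum at `t`. -/
def IsStrictLocalMax (g : ℝ → ℝ) (t : ℝ) : Prop :=
  ∀ᶠ s in 𝓝[≠] t, g s < g t

/-- A function of one real variable has a strict local minimum at `t`. -/
def IsStrictLocalMin (g : ℝ → ℝ) (t : ℝ) : Prop :=
  ∀ᶠ s in 𝓝[≠] t, g t < g s

/-- `f` has a saddle point at `p`: there are regular paths `γ₁, γ₂` in `D` passing through `p`
and intersecting transversally at `p` (their tangent vectors at `p` are not multiples of each
other) such that `f` has a local maximum at `p` along `γ₁` and a local minimum at `p`
along `γ₂`. -/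
def HasSaddleAt (D : Set (ℝ × ℝ)) (f : ℝ × ℝ → ℝ) (p : ℝ × ℝ) : Prop :=
  ∃ (a₁ b₁ a₂ b₂ t₁ t₂ : ℝ) (γ₁ γ₂ : ℝ → ℝ × ℝ),
    IsRegularPath D γ₁ a₁ b₁ ∧ IsRegularPath D γ₂ a₂ b₂ ∧
    t₁ ∈ Set.Ioo a₁ b₁ ∧ t₂ ∈ Set.Ioo a₂ b₂ ∧ γ₁ t₁ = p ∧ γ₂ t₂ = p ∧
    (∀ c : ℝ, deriv γ₁ t₁ ≠ c • deriv γ₂ t₂) ∧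
    (∀ c : ℝ, deriv γ₂ t₂ ≠ c • deriv γ₁ t₁) ∧
    IsLocalMax (f ∘ γ₁) t₁ ∧ IsLocalMin (f ∘ γ₂) t₂

/-- `f` has a strict saddle point at `p`: as for a saddle point, but with a strict local
maximum along `γ₁` and a strict local minimum along `γ₂`. -/
def HasStrictSaddleAt (D : Set (ℝ × ℝ)) (f : ℝ × ℝ → ℝ) (p : ℝ × ℝ) : Prop :=
  ∃ (a₁ b₁ a₂ b₂ t₁ t₂ : ℝ) (γ₁ γ₂ : ℝ → ℝ × ℝ),
    IsRegularPath D γ₁ a₁ b₁ ∧ IsRegularPath D γ₂ a₂ b₂ ∧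
    t₁ ∈ Set.Ioo a₁ b₁ ∧ t₂ ∈ Set.Ioo a₂ b₂ ∧ γ₁ t₁ = p ∧ γ₂ t₂ = p ∧
    (∀ c : ℝ, deriv γ₁ t₁ ≠ c • deriv γ₂ t₂) ∧
    (∀ c : ℝ, deriv γ₂ t₂ ≠ c • deriv γ₁ t₁) ∧
    IsStrictLocalMax (f ∘ γ₁) t₁ ∧ IsStrictLocalMin (f ∘ γ₂) t₂

lemma hasDerivAt_snd' {γ : ℝ → ℝ × ℝ} {t : ℝ} (h : DifferentiableAt ℝ γ t) :
    HasDerivAt (fun s => (γ s).2) (deriv γ t).2 t := by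
  have := (h.hasDerivAt.hasFDerivAt.snd).hasDerivAt
  simpa using this

lemma hasDerivAt_fst' {γ : ℝ → ℝ × ℝ} {t : ℝ} (h : DifferentiableAt ℝ γ t) :
    HasDerivAt (fun s => (γ s).1) (deriv γ t).1 t := by
  have := (h.hasDerivAt.hasFDerivAt.fst).hasDerivAt
  simpa using this

lemma isLocalMax_of_punctured {g : ℝ → ℝ} {t : ℝ}
    (h : ∀ᶠ s in 𝓝[≠] t, g s ≤ g t) : IsLocalMax g t := by
  have : ∀ᶠ s in 𝓝[≠] t ⊔ pure t, g s ≤ g t :=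
    eventually_sup.2 ⟨h, eventually_pure.2 le_rfl⟩
  rwa [nhdsNE_sup_pure] at this

lemma isLocalMin_of_punctured {g : ℝ → ℝ} {t : ℝ}
    (h : ∀ᶠ s in 𝓝[≠] t, g t ≤ g s) : IsLocalMin g t := by
  have : ∀ᶠ s in 𝓝[≠] t ⊔ pure t, g t ≤ g s :=
    eventually_sup.2 ⟨h, eventually_pure.2 le_rfl⟩
  rwa [nhdsNE_sup_pure] at this

/-- For positive integers `m, n`, the function `f(x, y) = x^m y^n` has a strict saddle point
at the origin if and only if both `m` and `n` are odd. -/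
theorem xm_yn_strict_saddle_iff (m n : ℕ) (hm : 0 < m) (hn : 0 < n) :
    HasStrictSaddleAt Set.univ (fun q : ℝ × ℝ => q.1 ^ m * q.2 ^ n) (0, 0) ↔
      Odd m ∧ Odd n := by
  constructor
  · rintro ⟨a₁, b₁, a₂, b₂, t₁, t₂, γ₁, γ₂, h₁, h₂, ht₁, ht₂, hp₁, hp₂, htr, -, hmax, hmin⟩
    have hval₁ : (fun q : ℝ × ℝ => q.1 ^ m * q.2 ^ n) (γ₁ t₁) = 0 := by
      rw [hp₁]; simp [zero_pow hm.ne', zero_pow hn.ne']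
    have hval₂ : (fun q : ℝ × ℝ => q.1 ^ m * q.2 ^ n) (γ₂ t₂) = 0 := by
      rw [hp₂]; simp [zero_pow hm.ne', zero_pow hn.ne']
    have hmax' : ∀ᶠ s in 𝓝[≠] t₁, (γ₁ s).1 ^ m * (γ₁ s).2 ^ n < 0 := by
      filter_upwards [hmax] with s hs
      simpa [Function.comp, hval₁] using hs
    have hmin' : ∀ᶠ s in 𝓝[≠] t₂, 0 < (γ₂ s).1 ^ m * (γ₂ s).2 ^ n := by
      filter_upwards [hmin] with s hs
      simpa [Function.comp, hval₂] using hs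
    rcases Nat.even_or_odd m with hem | hom
    · -- m even: derive contradiction using y-components
      exfalso
      rcases Nat.even_or_odd n with hen | hon
      · -- both even: f ≥ 0, contradicts strict max
        obtain ⟨s, hs⟩ := hmax'.exists
        have : (0:ℝ) ≤ (γ₁ s).1 ^ m * (γ₁ s).2 ^ n :=
          mul_nonneg (hem.pow_nonneg _) (hen.pow_nonneg _)
        linarith
      · -- m even, n odd: both tangent vectors horizontal
        have hy₁ : ∀ᶠ s in 𝓝[≠] t₁, (γ₁ s).2 ≤ (γ₁ t₁).2 := by
          filter_upwards [hmax'] with s hs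
          have h2 : (γ₁ s).2 ^ n < 0 := by
            by_contra h
            push_neg at h
            exact absurd (mul_nonneg (hem.pow_nonneg _) h) (not_le.2 hs)
          have := hon.pow_neg_iff.mp h2
          rw [hp₁]; exact this.le
        have hy₂ : ∀ᶠ s in 𝓝[≠] t₂, (γ₂ t₂).2 ≤ (γ₂ s).2 := by
          filter_upwards [hmin'] with s hs
          have h2 : 0 < (γ₂ s).2 ^ n := by
            rcases lt_trichotomy ((γ₂ s).2 ^ n) 0 with h | h | h
            · exfalso
              have : (γ₂ s).1 ^ m * (γ₂ s).2 ^ n ≤ 0 :=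
                mul_nonpos_of_nonneg_of_nonpos (hem.pow_nonneg _) h.le
              linarith
            · exfalso; rw [h, mul_zero] at hs; exact lt_irrefl _ hs
            · exact h
          have := hon.pow_pos_iff.mp h2
          rw [hp₂]; exact this.le
        obtain ⟨hd₁, hd₁0⟩ := h₁.2.2.2 t₁ ht₁
        obtain ⟨hd₂, hd₂0⟩ := h₂.2.2.2 t₂ ht₂
        have hz₁ : (deriv γ₁ t₁).2 = 0 := by
          have := (isLocalMax_of_punctured hy₁).deriv_eq_zero
          rwa [(hasDerivAt_snd' hd₁).deriv] at this
        have hz₂ : (deriv γ₂ t₂).2 = 0 := by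
          have := (isLocalMin_of_punctured (g := fun s => (γ₂ s).2) hy₂).deriv_eq_zero
          rwa [(hasDerivAt_snd' hd₂).deriv] at this
        have hx₂ : (deriv γ₂ t₂).1 ≠ 0 := by
          intro h
          exact hd₂0 (Prod.ext h hz₂)
        apply htr ((deriv γ₁ t₁).1 / (deriv γ₂ t₂).1)
        ext
        · simp [div_mul_cancel₀ _ hx₂]
        · simp [hz₁, hz₂]
    · rcases Nat.even_or_odd n with hen | hon
      · -- m odd, n even: symmetric, use x-components
        exfalso
        have hy₁ : ∀ᶠ s in 𝓝[≠] t₁, (γ₁ s).1 ≤ (γ₁ t₁).1 := by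
          filter_upwards [hmax'] with s hs
          have h2 : (γ₁ s).1 ^ m < 0 := by
            by_contra h
            push_neg at h
            exact absurd (mul_nonneg h (hen.pow_nonneg _)) (not_le.2 hs)
          have := hom.pow_neg_iff.mp h2
          rw [hp₁]; exact this.le
        have hy₂ : ∀ᶠ s in 𝓝[≠] t₂, (γ₂ t₂).1 ≤ (γ₂ s).1 := by
          filter_upwards [hmin'] with s hs
          have h2 : 0 < (γ₂ s).1 ^ m := by
            rcases lt_trichotomy ((γ₂ s).1 ^ m) 0 with h | h | h
            · exfalso
              have : (γ₂ s).1 ^ m * (γ₂ s).2 ^ n ≤ 0 :=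
                mul_nonpos_of_nonpos_of_nonneg h.le (hen.pow_nonneg _)
              linarith
            · exfalso; rw [h, zero_mul] at hs; exact lt_irrefl _ hs
            · exact h
          have := hom.pow_pos_iff.mp h2
          rw [hp₂]; exact this.le
        obtain ⟨hd₁, hd₁0⟩ := h₁.2.2.2 t₁ ht₁
        obtain ⟨hd₂, hd₂0⟩ := h₂.2.2.2 t₂ ht₂
        have hz₁ : (deriv γ₁ t₁).1 = 0 := by
          have := (isLocalMax_of_punctured hy₁).deriv_eq_zero
          rwa [(hasDerivAt_fst' hd₁).deriv] at this
        have hz₂ : (deriv γ₂ t₂).1 = 0 := by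
          have := (isLocalMin_of_punctured (g := fun s => (γ₂ s).1) hy₂).deriv_eq_zero
          rwa [(hasDerivAt_fst' hd₂).deriv] at this
        have hx₂ : (deriv γ₂ t₂).2 ≠ 0 := by
          intro h
          exact hd₂0 (Prod.ext hz₂ h)
        apply htr ((deriv γ₁ t₁).2 / (deriv γ₂ t₂).2)
        ext
        · simp [hz₁, hz₂]
        · simp [div_mul_cancel₀ _ hx₂]
      · exact ⟨hom, hon⟩
  · rintro ⟨hom, hon⟩
    have hmn : Even (m + n) := hom.add_odd hon
    refine ⟨-1, 1, -1, 1, 0, 0, fun t => (t, -t), fun t => (t, t), ?_, ?_, ?_, ?_, ?_, ?_,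
      ?_, ?_, ?_, ?_⟩
    · refine ⟨by norm_num, (continuous_id.prodMk continuous_neg).continuousOn,
        fun _ _ => mem_univ _, fun t _ => ?_⟩
      have h : HasDerivAt (fun t : ℝ => (t, -t)) ((1 : ℝ), (-1 : ℝ)) t :=
        (hasDerivAt_id t).prodMk ((hasDerivAt_id t).neg)
      refine ⟨h.differentiableAt, ?_⟩
      rw [h.deriv]
      intro hc
      simpa using congrArg Prod.fst hc
    · refine ⟨by norm_num, (continuous_id.prodMk continuous_id).continuousOn,
        fun _ _ => mem_univ _, fun t _ => ?_⟩
      have h : HasDerivAt (fun t : ℝ => (t, t)) ((1 : ℝ), (1 : ℝ)) t :=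
        (hasDerivAt_id t).prodMk (hasDerivAt_id t)
      refine ⟨h.differentiableAt, ?_⟩
      rw [h.deriv]
      intro hc
      simpa using congrArg Prod.fst hc
    · constructor <;> norm_num
    · constructor <;> norm_num
    · norm_num
    · norm_num
    · have h1 : deriv (fun t : ℝ => (t, -t)) 0 = ((1 : ℝ), (-1 : ℝ)) :=
        ((hasDerivAt_id (0:ℝ)).prodMk ((hasDerivAt_id (0:ℝ)).neg)).deriv
      have h2 : deriv (fun t : ℝ => (t, t)) 0 = ((1 : ℝ), (1 : ℝ)) :=
        ((hasDerivAt_id (0:ℝ)).prodMk (hasDerivAt_id (0:ℝ))).deriv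
      rw [h1, h2]
      intro c hc
      have hf := congrArg Prod.fst hc
      have hs := congrArg Prod.snd hc
      simp at hf hs
      rw [← hf] at hs
      norm_num at hs
    · have h1 : deriv (fun t : ℝ => (t, -t)) 0 = ((1 : ℝ), (-1 : ℝ)) :=
        ((hasDerivAt_id (0:ℝ)).prodMk ((hasDerivAt_id (0:ℝ)).neg)).deriv
      have h2 : deriv (fun t : ℝ => (t, t)) 0 = ((1 : ℝ), (1 : ℝ)) :=
        ((hasDerivAt_id (0:ℝ)).prodMk (hasDerivAt_id (0:ℝ))).deriv
      rw [h1, h2]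
      intro c hc
      have hf := congrArg Prod.fst hc
      have hs := congrArg Prod.snd hc
      simp at hf hs
      rw [← hf] at hs
      norm_num at hs
    · -- strict local max along (t, -t)
      filter_upwards [self_mem_nhdsWithin] with s hs
      have hs0 : s ≠ 0 := hs
      simp only [Function.comp]
      have : s ^ m * (-s) ^ n = -(s ^ (m + n)) := by
        rw [hon.neg_pow, pow_add]; ring
      rw [this]
      have hp : 0 < s ^ (m + n) := hmn.pow_pos hs0
      have : (0:ℝ) ^ m * (-(0:ℝ)) ^ n = 0 := by
        simp [zero_pow hm.ne']
      rw [this]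
      linarith
    · -- strict local min along (t, t)
      filter_upwards [self_mem_nhdsWithin] with s hs
      have hs0 : s ≠ 0 := hs
      simp only [Function.comp]
      have : s ^ m * s ^ n = s ^ (m + n) := by rw [pow_add]
      rw [this]
      have hp : 0 < s ^ (m + n) := hmn.pow_pos hs0
      have : (0:ℝ) ^ m * (0:ℝ) ^ n = 0 := by simp [zero_pow hm.ne']
      rw [this]
      linarith
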